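/- arXiv:1107.2054 — 3 statements merged into one kernel-verified Lean document; each statement's English description precedes it below -/
import Mathlib

section
/- Each component of the Lamb–Oseen vortex satisfies the heat equation away from the origin: for every t > 0 and every x ∈ ℝ² with x ≠ 0, ∂ₜΘ(t,x) = ΔΘ(t,x), where Δ is the Laplacian acting componentwise in the space variable x. -/
open Real MeasureTheory Filter
open scoped Topology ENNReal NNReal

noncomputable section

/-- The perpendicular vector `x⊥ = (x₂, -x₁)`. -/
def perp (x : EuclideanSpace ℝ (Fin 2)) : EuclideanSpace ℝ (Fin 2) :=
  (WithLp.equiv 2 (Fin 2 → ℝ)).symm ![x 1, -(x 0)]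

/-- The Lamb–Oseen vortex `Θ(t,x) = x⊥/(2π|x|²) · (1 - exp(-|x|²/(4t)))`, with value `0`
at `x = 0` (automatic here, since in Lean `0/0 = 0` and `perp 0 = 0`). -/
def lambOseen (t : ℝ) (x : EuclideanSpace ℝ (Fin 2)) : EuclideanSpace ℝ (Fin 2) :=
  ((1 - Real.exp (-‖x‖ ^ 2 / (4 * t))) / (2 * π * ‖x‖ ^ 2)) • perp x

/-- The partial derivative `∂ᵢ f (x)` of a scalar function on `ℝ²`. -/
def pd (i : Fin 2) (f : EuclideanSpace ℝ (Fin 2) → ℝ) (x : EuclideanSpace ℝ (Fin 2)) : ℝ :=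
  fderiv ℝ f x (EuclideanSpace.single i 1)

/- ### Auxiliary machinery -/

local notation "E2" => EuclideanSpace ℝ (Fin 2)

/-- The radial profile of the Lamb–Oseen vortex, as a function of `r = ‖x‖²`. -/
def A (t r : ℝ) : ℝ := (1 - Real.exp (-r / (4 * t))) / (2 * π * r)

/-- Radial derivative of `A`. -/
def A1 (t r : ℝ) : ℝ :=
  ((r / (4 * t)) * Real.exp (-r / (4 * t)) - (1 - Real.exp (-r / (4 * t)))) / (2 * π * r ^ 2)

/-- Second radial derivative of `A`. -/
def A2 (t r : ℝ) : ℝ :=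
  (2 - 2 * Real.exp (-r / (4 * t))
    - ((r / (4 * t)) ^ 2 + 2 * (r / (4 * t))) * Real.exp (-r / (4 * t))) / (2 * π * r ^ 3)

lemma hasDerivAt_A (t : ℝ) (ht : t ≠ 0) {r : ℝ} (hr : r ≠ 0) :
    HasDerivAt (A t) (A1 t r) r := by
  have h1 : HasDerivAt (fun r : ℝ => -r / (4 * t)) (-1 / (4 * t)) r := by
    simpa using ((hasDerivAt_id r).neg.div_const (4 * t))
  have h3 := (hasDerivAt_const r (1 : ℝ)).sub h1.exp
  have h4 : HasDerivAt (fun r : ℝ => 2 * π * r) (2 * π) r := by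
    simpa using (hasDerivAt_id r).const_mul (2 * π)
  have h5 := h3.div h4 (by positivity)
  refine h5.congr_deriv ?_
  unfold A1
  simp only [Pi.sub_apply, Pi.mul_apply]
  have hπ := Real.pi_ne_zero
  field_simp
  ring

lemma hasDerivAt_A1 (t : ℝ) (ht : t ≠ 0) {r : ℝ} (hr : r ≠ 0) :
    HasDerivAt (A1 t) (A2 t r) r := by
  have h1 : HasDerivAt (fun r : ℝ => -r / (4 * t)) (-1 / (4 * t)) r := by
    simpa using ((hasDerivAt_id r).neg.div_const (4 * t))
  have h0 : HasDerivAt (fun r : ℝ => r / (4 * t)) (1 / (4 * t)) r := by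
    simpa using ((hasDerivAt_id r).div_const (4 * t))
  have h3 := (h0.mul h1.exp).sub ((hasDerivAt_const r (1 : ℝ)).sub h1.exp)
  have h4 : HasDerivAt (fun r : ℝ => 2 * π * r ^ 2) (2 * π * (2 * r)) r := by
    simpa using ((hasDerivAt_pow 2 r).const_mul (2 * π))
  have h5 := h3.div h4 (by positivity)
  refine h5.congr_deriv ?_
  unfold A2
  simp only [Pi.sub_apply, Pi.mul_apply]
  have hπ := Real.pi_ne_zero
  field_simp
  ring

lemma hasDerivAt_A_time (r : ℝ) (hr : r ≠ 0) {t : ℝ} (ht : t ≠ 0) :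
    HasDerivAt (fun s => A s r) (-Real.exp (-r / (4 * t)) / (8 * π * t ^ 2)) t := by
  have h1 : HasDerivAt (fun s : ℝ => 4 * s) (4 : ℝ) t := by
    simpa using (hasDerivAt_id t).const_mul (4 : ℝ)
  have h2 := (h1.inv (by positivity)).const_mul (-r)
  have h2' : HasDerivAt (fun s : ℝ => -r / (4 * s)) (-r * (-4 / (4 * t) ^ 2)) t := by
    simpa [div_eq_mul_inv] using h2
  have h3 := ((hasDerivAt_const t (1 : ℝ)).sub h2'.exp).div_const (2 * π * r)
  refine h3.congr_deriv ?_
  have hπ := Real.pi_ne_zero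
  field_simp
  ring

lemma heat_identity (t r : ℝ) (ht : t ≠ 0) (hr : r ≠ 0) :
    -Real.exp (-r / (4 * t)) / (8 * π * t ^ 2) = 4 * r * A2 t r + 8 * A1 t r := by
  unfold A1 A2
  have hπ := Real.pi_ne_zero
  field_simp
  ring

lemma pd_eq_of_hasFDerivAt {f : E2 → ℝ} {x : E2} {L : E2 →L[ℝ] ℝ}
    (h : HasFDerivAt f L x) (j : Fin 2) :
    pd j f x = L (EuclideanSpace.single j 1) := by rw [pd, h.fderiv]

lemma hasFDerivAt_comp_normsq {g : ℝ → ℝ} {g' : ℝ} {y : E2} (hg : HasDerivAt g g' (‖y‖ ^ 2)) :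
    HasFDerivAt (fun z : E2 => g (‖z‖ ^ 2)) (g' • (2 • innerSL ℝ y)) y :=
  hg.comp_hasFDerivAt y (hasStrictFDerivAt_norm_sq y).hasFDerivAt

/-- Closed form for the first spatial partial derivative. -/
def D (t : ℝ) (c : E2 →L[ℝ] ℝ) (j : Fin 2) (y : E2) : ℝ :=
  A t (‖y‖ ^ 2) * c (EuclideanSpace.single j 1) + c y * (A1 t (‖y‖ ^ 2) * (2 * y j))

lemma pd_one (t : ℝ) (ht : t ≠ 0) (c : E2 →L[ℝ] ℝ) (j : Fin 2) {y : E2} (hy : y ≠ 0) :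
    pd j (fun z => A t (‖z‖ ^ 2) * c z) y = D t c j y := by
  have hr : (‖y‖ : ℝ) ^ 2 ≠ 0 := by
    have := norm_ne_zero_iff.mpr hy; positivity
  have h := (hasFDerivAt_comp_normsq (hasDerivAt_A t ht hr)).mul c.hasFDerivAt
  have e1 : (innerSL ℝ y) (EuclideanSpace.single j (1:ℝ)) = y j := by
    simp [EuclideanSpace.inner_single_right]
  rw [pd_eq_of_hasFDerivAt (f := fun z => A t (‖z‖ ^ 2) * c z) h]
  simp only [D, ContinuousLinearMap.add_apply, ContinuousLinearMap.smul_apply, e1,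
    smul_eq_mul]
  ring

lemma pd_two (t : ℝ) (ht : t ≠ 0) (c : E2 →L[ℝ] ℝ) (j : Fin 2) {x : E2} (hx : x ≠ 0) :
    pd j (D t c j) x
      = 4 * (x j) ^ 2 * A2 t (‖x‖ ^ 2) * c x + 2 * A1 t (‖x‖ ^ 2) * c x
        + 4 * (x j) * A1 t (‖x‖ ^ 2) * c (EuclideanSpace.single j 1) := by
  have hr : (‖x‖ : ℝ) ^ 2 ≠ 0 := by
    have := norm_ne_zero_iff.mpr hx; positivity
  have h1 := (hasFDerivAt_comp_normsq (hasDerivAt_A t ht hr)).mul_const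
      (c (EuclideanSpace.single j 1))
  have hproj : HasFDerivAt (fun y : E2 => (2:ℝ) * y j)
      ((2:ℝ) • (EuclideanSpace.proj j : E2 →L[ℝ] ℝ)) x :=
    (EuclideanSpace.proj j : E2 →L[ℝ] ℝ).hasFDerivAt.const_mul 2
  have h2 := c.hasFDerivAt.mul ((hasFDerivAt_comp_normsq (hasDerivAt_A1 t ht hr)).mul hproj)
  have h := h1.add h2
  have e1 : (innerSL ℝ x) (EuclideanSpace.single j (1:ℝ)) = x j := by
    simp [EuclideanSpace.inner_single_right]
  have e2 : (EuclideanSpace.proj j : E2 →L[ℝ] ℝ) (EuclideanSpace.single j (1:ℝ)) = 1 := by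
    simp
  have h' := pd_eq_of_hasFDerivAt (f := D t c j) h j
  rw [h']
  simp only [ContinuousLinearMap.add_apply, ContinuousLinearMap.smul_apply, e1, e2,
    smul_eq_mul, Pi.mul_apply]
  ring

lemma pd_pd (t : ℝ) (ht : t ≠ 0) (c : E2 →L[ℝ] ℝ) (j : Fin 2) {x : E2} (hx : x ≠ 0) :
    pd j (fun y => pd j (fun z => A t (‖z‖ ^ 2) * c z) y) x
      = 4 * (x j) ^ 2 * A2 t (‖x‖ ^ 2) * c x + 2 * A1 t (‖x‖ ^ 2) * c x
        + 4 * (x j) * A1 t (‖x‖ ^ 2) * c (EuclideanSpace.single j 1) := by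
  have hev : (fun y => pd j (fun z => A t (‖z‖ ^ 2) * c z) y) =ᶠ[nhds x] D t c j := by
    filter_upwards [eventually_ne_nhds hx] with y hy
    exact pd_one t ht c j hy
  have : pd j (fun y => pd j (fun z => A t (‖z‖ ^ 2) * c z) y) x = pd j (D t c j) x := by
    show (fderiv ℝ (fun y => pd j (fun z => A t (‖z‖ ^ 2) * c z) y) x) (EuclideanSpace.single j 1)
      = (fderiv ℝ (D t c j) x) (EuclideanSpace.single j 1)
    rw [hev.fderiv_eq]
  rw [this, pd_two t ht c j hx]

lemma norm_sq_eq (x : E2) : ‖x‖ ^ 2 = x 0 ^ 2 + x 1 ^ 2 := by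
  rw [EuclideanSpace.norm_eq, Real.sq_sqrt (by positivity)]
  simp [Fin.sum_univ_two, sq_abs]

/-- each component of the Lamb–Oseen vortex satisfies the heat equation away from
the origin: `∂ₜΘ(t,x) = ΔΘ(t,x)` for `t > 0`, `x ≠ 0`, where `Δ = ∂₁∂₁ + ∂₂∂₂` acts
componentwise in the space variable. -/
theorem lambOseen_heat_equation (t : ℝ) (ht : 0 < t) (x : EuclideanSpace ℝ (Fin 2))
    (hx : x ≠ 0) (i : Fin 2) :
    deriv (fun s => lambOseen s x i) t
      = ∑ j : Fin 2, pd j (fun y => pd j (fun z => lambOseen t z i) y) x := by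
  have ht' : t ≠ 0 := ne_of_gt ht
  have hr : (‖x‖ : ℝ) ^ 2 ≠ 0 := by
    have := norm_ne_zero_iff.mpr hx; positivity
  have hnorm := norm_sq_eq x
  have hid := heat_identity t (‖x‖ ^ 2) ht' hr
  fin_cases i
  · -- i = 0, component is `A t ‖z‖² * z 1`
    show deriv (fun s => lambOseen s x 0) t
      = ∑ j : Fin 2, pd j (fun y => pd j (fun z => lambOseen t z 0) y) x
    set c : E2 →L[ℝ] ℝ := (EuclideanSpace.proj (1 : Fin 2) : E2 →L[ℝ] ℝ) with hc
    have hfun : ∀ s : ℝ, ∀ z : E2, lambOseen s z 0 = A s (‖z‖ ^ 2) * c z := by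
      intro s z
      simp [lambOseen, perp, A, hc, PiLp.smul_apply, smul_eq_mul]
    have hL : deriv (fun s => lambOseen s x 0) t
        = -Real.exp (-(‖x‖ ^ 2) / (4 * t)) / (8 * π * t ^ 2) * c x := by
      have : (fun s => lambOseen s x 0) = fun s => A s (‖x‖ ^ 2) * c x := by
        funext s; exact hfun s x
      rw [this, ((hasDerivAt_A_time (‖x‖ ^ 2) hr ht').mul_const (c x)).deriv]
    have hinner : (fun z : E2 => lambOseen t z 0) = fun z => A t (‖z‖ ^ 2) * c z := by
      funext z; exact hfun t z
    rw [hL, hinner]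
    rw [Fin.sum_univ_two, pd_pd t ht' c 0 hx, pd_pd t ht' c 1 hx]
    have e0 : c (EuclideanSpace.single (0 : Fin 2) 1) = 0 := by simp [hc]
    have e1 : c (EuclideanSpace.single (1 : Fin 2) 1) = 1 := by simp [hc]
    rw [e0, e1]
    have hcx : c x = x 1 := rfl
    rw [hcx]
    rw [hnorm] at hid ⊢
    linear_combination (x 1) * hid
  · -- i = 1, component is `A t ‖z‖² * (-(z 0))`
    show deriv (fun s => lambOseen s x 1) t
      = ∑ j : Fin 2, pd j (fun y => pd j (fun z => lambOseen t z 1) y) x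
    set c : E2 →L[ℝ] ℝ := -(EuclideanSpace.proj (0 : Fin 2) : E2 →L[ℝ] ℝ) with hc
    have hfun : ∀ s : ℝ, ∀ z : E2, lambOseen s z 1 = A s (‖z‖ ^ 2) * c z := by
      intro s z
      simp [lambOseen, perp, A, hc, PiLp.smul_apply, smul_eq_mul]
    have hL : deriv (fun s => lambOseen s x 1) t
        = -Real.exp (-(‖x‖ ^ 2) / (4 * t)) / (8 * π * t ^ 2) * c x := by
      have : (fun s => lambOseen s x 1) = fun s => A s (‖x‖ ^ 2) * c x := by
        funext s; exact hfun s x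
      rw [this, ((hasDerivAt_A_time (‖x‖ ^ 2) hr ht').mul_const (c x)).deriv]
    have hinner : (fun z : E2 => lambOseen t z 1) = fun z => A t (‖z‖ ^ 2) * c z := by
      funext z; exact hfun t z
    rw [hL, hinner]
    rw [Fin.sum_univ_two, pd_pd t ht' c 0 hx, pd_pd t ht' c 1 hx]
    have e0 : c (EuclideanSpace.single (0 : Fin 2) 1) = -1 := by simp [hc]
    have e1 : c (EuclideanSpace.single (1 : Fin 2) 1) = 0 := by simp [hc]
    rw [e0, e1]
    have hcx : c x = -(x 0) := rfl
    rw [hcx]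
    rw [hnorm] at hid ⊢
    linear_combination (-(x 0)) * hid

end
end

section
/- For every p with 2 < p ≤ ∞ and every t > 0, the Lamb–Oseen vortex Θ(t,·) belongs to Lᵖ(ℝ²; ℝ²), and its Lᵖ norm decays self-similarly: t^{1/2 − 1/p}·‖Θ(t,·)‖_{Lᵖ(ℝ²)} = ‖Θ(1,·)‖_{Lᵖ(ℝ²)} (with the convention 1/∞ = 0). -/
open Real MeasureTheory Filter
open scoped Topology ENNReal NNReal

noncomputable section

lemma perp_smul (c : ℝ) (x : EuclideanSpace ℝ (Fin 2)) : perp (c • x) = c • perp x := by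
  unfold perp
  ext i
  fin_cases i <;>
    simp [WithLp.equiv_symm_apply, PiLp.toLp_apply, PiLp.smul_apply, smul_eq_mul]

lemma norm_perp (x : EuclideanSpace ℝ (Fin 2)) : ‖perp x‖ = ‖x‖ := by
  simp only [perp, EuclideanSpace.norm_eq, WithLp.equiv_symm_apply, PiLp.toLp_apply, Fin.sum_univ_two,
    Matrix.cons_val_zero, Matrix.cons_val_one, Matrix.head_cons, norm_neg]
  rw [add_comm]

lemma continuous_perp : Continuous perp := by
  have h0 : Continuous fun x : EuclideanSpace ℝ (Fin 2) => x 0 :=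
    (EuclideanSpace.proj (0 : Fin 2)).continuous
  have h1 : Continuous fun x : EuclideanSpace ℝ (Fin 2) => x 1 :=
    (EuclideanSpace.proj (1 : Fin 2)).continuous
  refine (PiLp.continuous_toLp 2 (fun _ : Fin 2 => ℝ)).comp (continuous_pi fun i => ?_)
  fin_cases i
  · simpa using h1
  · simp; exact h0.neg

lemma measurable_lambOseen (t : ℝ) : Measurable (lambOseen t) := by
  unfold lambOseen
  have hc : Measurable fun x : EuclideanSpace ℝ (Fin 2) =>
      (1 - Real.exp (-‖x‖ ^ 2 / (4 * t))) / (2 * π * ‖x‖ ^ 2) := by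
    fun_prop
  exact hc.smul continuous_perp.measurable

lemma norm_lambOseen_one_le (x : EuclideanSpace ℝ (Fin 2)) :
    ‖lambOseen 1 x‖ ≤ π⁻¹ * (1 + ‖x‖)⁻¹ := by
  by_cases hx : x = 0
  · have : lambOseen 1 x = 0 := by
      simp [hx, lambOseen]
    rw [this, norm_zero]
    positivity
  · set s := ‖x‖ with hsdef
    have hs : 0 < s := norm_pos_iff.2 hx
    have hexp := Real.exp_pos (-s ^ 2 / 4)
    have hexp1 : Real.exp (-s ^ 2 / 4) ≤ 1 :=
      Real.exp_le_one_iff.2 (by nlinarith)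
    have hexp2 : 1 - s ^ 2 / 4 ≤ Real.exp (-s ^ 2 / 4) := by
      have := Real.add_one_le_exp (-s ^ 2 / 4); linarith
    have hnorm : ‖lambOseen 1 x‖ = (1 - Real.exp (-s ^ 2 / 4)) / (2 * π * s ^ 2) * s := by
      rw [lambOseen, norm_smul, norm_perp, Real.norm_eq_abs, mul_one, abs_of_nonneg]
      exact div_nonneg (by linarith) (by positivity)
    rw [hnorm]
    rw [div_mul_eq_mul_div, div_le_iff₀ (by positivity)]
    have hπ : (0:ℝ) < π := Real.pi_pos
    have h2 : π⁻¹ * (1 + s)⁻¹ * (2 * π * s ^ 2) = 2 * s ^ 2 / (1 + s) := by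
      field_simp
    rw [h2, le_div_iff₀ (by positivity)]
    rcases le_total s 2 with h | h
    · nlinarith
    · nlinarith

lemma lambOseen_scaling {t : ℝ} (ht : 0 < t) (x : EuclideanSpace ℝ (Fin 2)) :
    lambOseen t x = (Real.sqrt t)⁻¹ • lambOseen 1 ((Real.sqrt t)⁻¹ • x) := by
  set c := Real.sqrt t with hcdef
  have hc : 0 < c := Real.sqrt_pos.2 ht
  have hc2 : c ^ 2 = t := Real.sq_sqrt ht.le
  unfold lambOseen
  rw [perp_smul, norm_smul, smul_smul, smul_smul]
  congr 1
  have hnc : ‖(c⁻¹ : ℝ)‖ = c⁻¹ := by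
    rw [norm_inv, Real.norm_eq_abs, abs_of_pos hc]
  rw [hnc]
  have harg : (c⁻¹ * ‖x‖) ^ 2 = ‖x‖ ^ 2 / t := by
    rw [mul_pow, inv_pow, hc2]; ring
  rw [harg]
  have harg2 : -(‖x‖ ^ 2 / t) / (4 * 1) = -‖x‖ ^ 2 / (4 * t) := by
    rw [mul_one]; field_simp
  rw [harg2]
  by_cases hx : x = 0
  · simp [hx]
  · have hs : ‖x‖ ≠ 0 := norm_ne_zero_iff.2 hx
    have hπ : π ≠ 0 := Real.pi_ne_zero
    have hcc : c * c = t := by nlinarith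
    field_simp
    linear_combination (1 - Real.exp (-(‖x‖ ^ 2 / (4 * t)))) * hcc

lemma eLpNorm_scale (p : ℝ≥0∞) {c : ℝ} (hc : 0 < c)
    (f : EuclideanSpace ℝ (Fin 2) → EuclideanSpace ℝ (Fin 2)) (hf : Measurable f) :
    eLpNorm (fun x => f (c⁻¹ • x)) p (volume : Measure (EuclideanSpace ℝ (Fin 2)))
      = ENNReal.ofReal (c ^ 2) ^ (1 / p).toReal * eLpNorm f p volume := by
  have hmap : Measure.map (fun x : EuclideanSpace ℝ (Fin 2) => c⁻¹ • x) volume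
      = ENNReal.ofReal (c ^ 2) • volume := by
    rw [Measure.map_addHaar_smul volume (by positivity : (c⁻¹ : ℝ) ≠ 0)]
    congr 1
    rw [finrank_euclideanSpace_fin]
    rw [inv_pow, inv_inv, abs_of_pos (by positivity)]
  have h1 : eLpNorm (fun x => f (c⁻¹ • x)) p volume
      = eLpNorm f p (Measure.map (fun x : EuclideanSpace ℝ (Fin 2) => c⁻¹ • x) volume) := by
    refine (eLpNorm_map_measure ?_ ?_).symm
    · exact hf.aestronglyMeasurable
    · exact (measurable_const_smul _).aemeasurable
  rw [h1, hmap, eLpNorm_smul_measure_of_ne_zero (by simp [hc.ne'] : ENNReal.ofReal (c ^ 2) ≠ 0),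
    smul_eq_mul]

lemma memLp_one (p : ℝ≥0∞) (hp : 2 < p) :
    MemLp (lambOseen 1) p (volume : Measure (EuclideanSpace ℝ (Fin 2))) := by
  have hmeas := measurable_lambOseen 1
  have hπ : (0:ℝ) < π := Real.pi_pos
  by_cases htop : p = ∞
  · subst htop
    refine memLp_top_of_bound hmeas.aestronglyMeasurable π⁻¹ (Eventually.of_forall fun x => ?_)
    refine (norm_lambOseen_one_le x).trans ?_
    have : (1 + ‖x‖)⁻¹ ≤ 1 := by
      rw [inv_le_one_iff₀]; right; linarith [norm_nonneg x]
    nlinarith [inv_pos.2 hπ]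
  · have hp0 : p ≠ 0 := by intro h; rw [h] at hp; exact absurd hp (by simp)
    have hq : (2:ℝ) < p.toReal := by
      have := (ENNReal.toReal_lt_toReal (by simp) htop).2 hp
      simpa using this
    have hq0 : 0 < p.toReal := by linarith
    have hint : Integrable (fun x : EuclideanSpace ℝ (Fin 2) =>
        ‖lambOseen 1 x‖ ^ p.toReal) volume := by
      have hg : Integrable (fun x : EuclideanSpace ℝ (Fin 2) =>
          (π⁻¹) ^ p.toReal * (1 + ‖x‖) ^ (-p.toReal)) volume := by
        refine Integrable.const_mul ?_ _
        apply integrable_one_add_norm (μ := volume)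
        rw [finrank_euclideanSpace_fin]; exact_mod_cast hq
      refine hg.mono' ?_ (Eventually.of_forall fun x => ?_)
      · exact (by fun_prop :
          Measurable fun x : EuclideanSpace ℝ (Fin 2) =>
            ‖lambOseen 1 x‖ ^ p.toReal).aestronglyMeasurable
      · rw [Real.norm_eq_abs, abs_of_nonneg (Real.rpow_nonneg (norm_nonneg _) _)]
        calc ‖lambOseen 1 x‖ ^ p.toReal
            ≤ (π⁻¹ * (1 + ‖x‖)⁻¹) ^ p.toReal :=
              Real.rpow_le_rpow (norm_nonneg _) (norm_lambOseen_one_le x) hq0.le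
          _ = (π⁻¹) ^ p.toReal * (1 + ‖x‖) ^ (-p.toReal) := by
              rw [Real.mul_rpow (by positivity) (by positivity)]
              congr 1
              rw [Real.inv_rpow (by positivity), ← Real.rpow_neg (by positivity)]
    exact (memLp_norm_rpow_iff hmeas.aestronglyMeasurable hp0 htop).1
      (by rw [ENNReal.div_self hp0 htop]; exact memLp_one_iff_integrable.2 hint)

/-- for `2 < p ≤ ∞` and `t > 0` the Lamb–Oseen vortex `Θ(t,·)` belongs to
`Lᵖ(ℝ²;ℝ²)` and `t^{1/2-1/p} ‖Θ(t,·)‖_{Lᵖ} = ‖Θ(1,·)‖_{Lᵖ}` (with `1/∞ = 0`). -/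
theorem lambOseen_Lp_decay (p : ℝ≥0∞) (hp : 2 < p) (t : ℝ) (ht : 0 < t) :
    MemLp (lambOseen t) p (volume : Measure (EuclideanSpace ℝ (Fin 2))) ∧
    ENNReal.ofReal (t ^ ((1 : ℝ) / 2 - 1 / p.toReal))
        * eLpNorm (lambOseen t) p (volume : Measure (EuclideanSpace ℝ (Fin 2)))
      = eLpNorm (lambOseen 1) p (volume : Measure (EuclideanSpace ℝ (Fin 2))) := by
  have hmem1 := memLp_one p hp
  set c := Real.sqrt t with hcdef
  have hc : 0 < c := Real.sqrt_pos.2 ht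
  have hc2 : c ^ 2 = t := Real.sq_sqrt ht.le
  have hscale : lambOseen t = fun x => c⁻¹ • lambOseen 1 (c⁻¹ • x) :=
    funext (lambOseen_scaling ht)
  have hkey : eLpNorm (lambOseen t) p volume
      = ENNReal.ofReal (c⁻¹ * (c ^ 2) ^ (1 / p).toReal) * eLpNorm (lambOseen 1) p volume := by
    rw [hscale]
    rw [show (fun x : EuclideanSpace ℝ (Fin 2) => c⁻¹ • lambOseen 1 (c⁻¹ • x))
        = c⁻¹ • (fun x : EuclideanSpace ℝ (Fin 2) => lambOseen 1 (c⁻¹ • x)) from rfl]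
    rw [eLpNorm_const_smul, eLpNorm_scale p hc _ (measurable_lambOseen 1)]
    rw [← mul_assoc]
    congr 1
    rw [Real.enorm_eq_ofReal (by positivity),
      ENNReal.ofReal_rpow_of_pos (by positivity),
      ← ENNReal.ofReal_mul (by positivity)]
  constructor
  · refine ⟨(measurable_lambOseen t).aestronglyMeasurable, ?_⟩
    rw [hkey]
    exact ENNReal.mul_lt_top ENNReal.ofReal_lt_top hmem1.2
  · rw [hkey, ← mul_assoc, ← ENNReal.ofReal_mul (by positivity)]
    have hb : ((1 : ℝ≥0∞) / p).toReal = 1 / p.toReal := by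
      rw [one_div, one_div, ENNReal.toReal_inv]
    have hone : t ^ ((1 : ℝ) / 2 - 1 / p.toReal) * (c⁻¹ * (c ^ 2) ^ ((1:ℝ≥0∞) / p).toReal)
        = 1 := by
      rw [hb, hc2, hcdef, Real.sqrt_eq_rpow, ← Real.rpow_neg ht.le,
        ← Real.rpow_add ht, ← Real.rpow_add ht,
        show (1 : ℝ) / 2 - 1 / p.toReal + (-(1 / 2) + 1 / p.toReal) = 0 by ring,
        Real.rpow_zero]
    rw [hone, ENNReal.ofReal_one, one_mul]
end
end

section
/- For every p ∈ (2,∞) and every T₀ > 0, one has lim_{t→∞} (t − T₀)^{1/2 − 1/p}·‖Θ(t,·) − Θ(t − T₀,·)‖_{Lᵖ(ℝ²)} = 0. -/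
open Real MeasureTheory Filter
open scoped Topology ENNReal NNReal

noncomputable section

lemma perp_zero : perp (0 : EuclideanSpace ℝ (Fin 2)) = 0 := by
  ext i
  fin_cases i <;> simp [perp]

lemma lambOseen_sub_norm_le {s t : ℝ} (hs : 0 < s) (hst : s < t)
    (x : EuclideanSpace ℝ (Fin 2)) :
    ‖lambOseen t x - lambOseen s x‖
      ≤ (t - s) / (8 * π * s * t) * (‖x‖ * rexp (-‖x‖ ^ 2 / (4 * t))) := by
  have ht : 0 < t := hs.trans hst
  have hπ := Real.pi_pos
  rcases eq_or_ne x 0 with rfl | hx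
  · simp [lambOseen, perp_zero]
  have hu : 0 < ‖x‖ ^ 2 := pow_pos (norm_pos_iff.mpr hx) 2
  set u := ‖x‖ ^ 2 with hu_def
  have hdiff : lambOseen t x - lambOseen s x
      = ((1 - rexp (-u / (4 * t))) / (2 * π * u)
          - (1 - rexp (-u / (4 * s))) / (2 * π * u)) • perp x := by
    rw [lambOseen, lambOseen, ← sub_smul]
  rw [hdiff, norm_smul, norm_perp, Real.norm_eq_abs]
  have hEts : rexp (-u / (4 * s)) ≤ rexp (-u / (4 * t)) := by
    apply Real.exp_le_exp.2
    rw [neg_div, neg_div, neg_le_neg_iff]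
    gcongr
  set d := u / (4 * s) - u / (4 * t) with hd_def
  have hEs : rexp (-u / (4 * s)) = rexp (-u / (4 * t)) * rexp (-d) := by
    rw [← Real.exp_add]
    congr 1
    rw [hd_def]
    ring
  have hkey : rexp (-u / (4 * t)) - rexp (-u / (4 * s))
      ≤ rexp (-u / (4 * t)) * d := by
    rw [hEs]
    have h1 : 1 - rexp (-d) ≤ d := by nlinarith [Real.add_one_le_exp (-d)]
    nlinarith [mul_le_mul_of_nonneg_left h1 (Real.exp_nonneg (-u / (4 * t)))]
  have habs : |(1 - rexp (-u / (4 * t))) / (2 * π * u)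
      - (1 - rexp (-u / (4 * s))) / (2 * π * u)|
      = (rexp (-u / (4 * t)) - rexp (-u / (4 * s))) / (2 * π * u) := by
    rw [div_sub_div_same, abs_div, abs_of_pos (by positivity : (0:ℝ) < 2 * π * u)]
    congr 1
    rw [show (1 - rexp (-u / (4 * t))) - (1 - rexp (-u / (4 * s)))
        = -(rexp (-u / (4 * t)) - rexp (-u / (4 * s))) by ring, abs_neg,
      abs_of_nonneg (by linarith)]
  have hcoef : |(1 - rexp (-u / (4 * t))) / (2 * π * u)
      - (1 - rexp (-u / (4 * s))) / (2 * π * u)|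
      ≤ (t - s) / (8 * π * s * t) * rexp (-u / (4 * t)) := by
    rw [habs]
    have heq : (rexp (-u / (4 * t)) * d) / (2 * π * u)
        = (t - s) / (8 * π * s * t) * rexp (-u / (4 * t)) := by
      rw [hd_def]
      field_simp
      ring
    calc (rexp (-u / (4 * t)) - rexp (-u / (4 * s))) / (2 * π * u)
        ≤ (rexp (-u / (4 * t)) * d) / (2 * π * u) := by gcongr
      _ = (t - s) / (8 * π * s * t) * rexp (-u / (4 * t)) := heq
  calc |(1 - rexp (-u / (4 * t))) / (2 * π * u)
      - (1 - rexp (-u / (4 * s))) / (2 * π * u)| * ‖x‖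
      ≤ ((t - s) / (8 * π * s * t) * rexp (-u / (4 * t))) * ‖x‖ :=
        mul_le_mul_of_nonneg_right hcoef (norm_nonneg x)
    _ = (t - s) / (8 * π * s * t) * (‖x‖ * rexp (-u / (4 * t))) := by ring

lemma integrable_gauss {b : ℝ} (hb : 0 < b) :
    Integrable (fun v : EuclideanSpace ℝ (Fin 2) => rexp (-b * ‖v‖ ^ 2)) volume := by
  have h := (GaussianFourier.integrable_cexp_neg_mul_sq_norm_add
    (V := EuclideanSpace ℝ (Fin 2)) (b := (b : ℂ)) (by simpa using hb) 0
    (0 : EuclideanSpace ℝ (Fin 2))).norm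
  have heq : ∀ v : EuclideanSpace ℝ (Fin 2),
      ‖Complex.exp (-(b : ℂ) * (‖v‖ : ℂ) ^ 2 + 0 * (inner ℝ (0 : EuclideanSpace ℝ (Fin 2)) v : ℝ))‖
        = rexp (-b * ‖v‖ ^ 2) := by
    intro v
    rw [Complex.norm_exp]
    congr 1
    rw [show -(b:ℂ) * (‖v‖:ℂ) ^ 2 + 0 * ((inner ℝ (0 : EuclideanSpace ℝ (Fin 2)) v : ℝ) : ℂ)
        = ((-b * ‖v‖ ^ 2 : ℝ) : ℂ) by push_cast; ring]
    exact Complex.ofReal_re _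
  refine h.congr (Filter.Eventually.of_forall fun v => heq v)

lemma eLpNorm_gauss_lt_top {p b : ℝ} (hp : 0 < p) (hb : 0 < b) :
    eLpNorm (fun v : EuclideanSpace ℝ (Fin 2) => rexp (-b * ‖v‖ ^ 2))
      (ENNReal.ofReal p) volume < ⊤ := by
  have hq0 : (ENNReal.ofReal p) ≠ 0 := by
    simp only [ne_eq, ENNReal.ofReal_eq_zero, not_le]; exact hp
  rw [eLpNorm_eq_lintegral_rpow_enorm_toReal hq0 ENNReal.ofReal_ne_top,
    ENNReal.toReal_ofReal hp.le]
  refine ENNReal.rpow_lt_top_of_nonneg (by positivity) ?_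
  have hint : Integrable (fun v : EuclideanSpace ℝ (Fin 2) => rexp (-(b * p) * ‖v‖ ^ 2)) volume :=
    integrable_gauss (by positivity)
  have heq : ∀ v : EuclideanSpace ℝ (Fin 2),
      ‖rexp (-b * ‖v‖ ^ 2)‖ₑ ^ p = ‖rexp (-(b * p) * ‖v‖ ^ 2)‖ₑ := by
    intro v
    rw [Real.enorm_eq_ofReal (Real.exp_nonneg _), Real.enorm_eq_ofReal (Real.exp_nonneg _),
      ENNReal.ofReal_rpow_of_nonneg (Real.exp_nonneg _) hp.le, ← Real.exp_mul,
      show -b * ‖v‖ ^ 2 * p = -(b * p) * ‖v‖ ^ 2 by ring]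
  rw [lintegral_congr heq]
  exact ne_of_lt hint.hasFiniteIntegral

lemma eLpNorm_Phi_lt_top {p : ℝ} (hp : 0 < p) :
    eLpNorm (fun y : EuclideanSpace ℝ (Fin 2) => ‖y‖ * rexp (-‖y‖ ^ 2 / 4))
      (ENNReal.ofReal p) volume < ⊤ := by
  have hbound : ∀ y : EuclideanSpace ℝ (Fin 2),
      ‖‖y‖ * rexp (-‖y‖ ^ 2 / 4)‖ ≤ 3 * rexp (-(1/8) * ‖y‖ ^ 2) := by
    intro y
    rw [Real.norm_eq_abs, abs_of_nonneg (by positivity)]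
    set r := ‖y‖ with hr_def
    have hr : 0 ≤ r := norm_nonneg y
    have h1 : rexp (-r ^ 2 / 4) = rexp (-(1/8) * r ^ 2) * rexp (-(1/8) * r ^ 2) := by
      rw [← Real.exp_add]
      congr 1
      ring
    rw [h1, ← mul_assoc]
    have h2 : r * rexp (-(1/8) * r ^ 2) ≤ 3 := by
      have h3 := Real.add_one_le_exp ((1/8) * r ^ 2)
      have h4 : rexp (-(1/8) * r ^ 2) = (rexp ((1/8) * r ^ 2))⁻¹ := by
        rw [← Real.exp_neg]; ring_nf
      rw [h4, ← div_eq_mul_inv, div_le_iff₀ (Real.exp_pos _)]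
      nlinarith [sq_nonneg (r - 4/3)]
    exact mul_le_mul_of_nonneg_right h2 (Real.exp_nonneg _)
  calc eLpNorm (fun y : EuclideanSpace ℝ (Fin 2) => ‖y‖ * rexp (-‖y‖ ^ 2 / 4))
        (ENNReal.ofReal p) volume
      ≤ eLpNorm (fun y : EuclideanSpace ℝ (Fin 2) => 3 * rexp (-(1/8) * ‖y‖ ^ 2))
        (ENNReal.ofReal p) volume := eLpNorm_mono_real hbound
    _ = ‖(3:ℝ)‖ₑ * eLpNorm (fun y : EuclideanSpace ℝ (Fin 2) => rexp (-(1/8) * ‖y‖ ^ 2))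
        (ENNReal.ofReal p) volume := by
        rw [← eLpNorm_const_smul (3:ℝ)
          (fun y : EuclideanSpace ℝ (Fin 2) => rexp (-(1/8) * ‖y‖ ^ 2))]
        rfl
    _ < ⊤ := ENNReal.mul_lt_top enorm_lt_top
          (eLpNorm_gauss_lt_top hp (by norm_num))

lemma eLpNorm_scaled {p : ℝ} (hp : 0 < p) {t : ℝ} (ht : 0 < t) :
    eLpNorm (fun x : EuclideanSpace ℝ (Fin 2) => ‖x‖ * rexp (-‖x‖ ^ 2 / (4 * t)))
        (ENNReal.ofReal p) volume
      = ENNReal.ofReal (Real.sqrt t) * ENNReal.ofReal t ^ (1 / p)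
          * eLpNorm (fun y : EuclideanSpace ℝ (Fin 2) => ‖y‖ * rexp (-‖y‖ ^ 2 / 4))
              (ENNReal.ofReal p) volume := by
  set Φ : EuclideanSpace ℝ (Fin 2) → ℝ := fun y => ‖y‖ * rexp (-‖y‖ ^ 2 / 4) with hΦ
  have hst : 0 < Real.sqrt t := Real.sqrt_pos.2 ht
  have hΦc : Continuous Φ := by
    apply continuous_norm.mul
    exact Real.continuous_exp.comp (by continuity)
  have hfun : (fun x : EuclideanSpace ℝ (Fin 2) => ‖x‖ * rexp (-‖x‖ ^ 2 / (4 * t)))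
      = (Real.sqrt t) • (Φ ∘ (fun x : EuclideanSpace ℝ (Fin 2) => ((Real.sqrt t)⁻¹ : ℝ) • x)) := by
    funext x
    have h1 : ‖((Real.sqrt t)⁻¹ : ℝ) • x‖ = (Real.sqrt t)⁻¹ * ‖x‖ := by
      rw [norm_smul, Real.norm_eq_abs, abs_of_pos (by positivity)]
    simp only [Pi.smul_apply, Function.comp_apply, smul_eq_mul, hΦ, h1]
    have h2 : ((Real.sqrt t)⁻¹ * ‖x‖) ^ 2 = ‖x‖ ^ 2 / t := by
      rw [mul_pow, inv_pow, Real.sq_sqrt ht.le, inv_mul_eq_div]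
    rw [h2, show -(‖x‖ ^ 2 / t) / 4 = -‖x‖ ^ 2 / (4 * t) by ring]
    field_simp
  rw [hfun, eLpNorm_const_smul]
  have hmeas : Measure.map (fun x : EuclideanSpace ℝ (Fin 2) => ((Real.sqrt t)⁻¹ : ℝ) • x)
      (volume : Measure (EuclideanSpace ℝ (Fin 2))) = ENNReal.ofReal t • volume := by
    rw [Measure.map_addHaar_smul volume (by positivity : ((Real.sqrt t)⁻¹ : ℝ) ≠ 0)]
    congr 1
    rw [finrank_euclideanSpace_fin]
    rw [show ((((Real.sqrt t)⁻¹ : ℝ)) ^ 2)⁻¹ = t by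
      rw [inv_pow, inv_inv, Real.sq_sqrt ht.le]]
    rw [abs_of_pos ht]
  rw [← eLpNorm_map_measure (hΦc.aestronglyMeasurable) (measurable_const_smul _).aemeasurable,
    hmeas, eLpNorm_smul_measure_of_ne_top ENNReal.ofReal_ne_top, smul_eq_mul,
    Real.enorm_eq_ofReal (Real.sqrt_nonneg t),
    show (1 / (ENNReal.ofReal p)).toReal = 1 / p by
      rw [ENNReal.toReal_div, ENNReal.toReal_one, ENNReal.toReal_ofReal hp.le]]
  ring

/-- for `p ∈ (2,∞)` and `T₀ > 0`,
`lim_{t→∞} (t-T₀)^{1/2-1/p} ‖Θ(t,·) - Θ(t-T₀,·)‖_{Lᵖ(ℝ²)} = 0`. -/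
theorem lambOseen_time_shift_decay (p : ℝ) (hp : 2 < p) (T₀ : ℝ) (hT₀ : 0 < T₀) :
    Tendsto (fun t : ℝ => (t - T₀) ^ ((1 : ℝ) / 2 - 1 / p)
        * (eLpNorm (fun x : EuclideanSpace ℝ (Fin 2) => lambOseen t x - lambOseen (t - T₀) x)
            (ENNReal.ofReal p) volume).toReal)
      atTop (𝓝 0) := by
  have hp0 : 0 < p := by linarith
  have hπ := Real.pi_pos
  set q : ℝ≥0∞ := ENNReal.ofReal p with hq
  set Φ : EuclideanSpace ℝ (Fin 2) → ℝ := fun y => ‖y‖ * rexp (-‖y‖ ^ 2 / 4) with hΦ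
  set K : ℝ := (eLpNorm Φ q volume).toReal with hK
  have hKtop : eLpNorm Φ q volume ≠ ⊤ := (eLpNorm_Phi_lt_top hp0).ne
  have hK0 : 0 ≤ K := ENNReal.toReal_nonneg
  set C : ℝ := T₀ * K / (8 * π) with hC
  have hα : (0:ℝ) ≤ 1/2 - 1/p := by
    have h1 : 1/p ≤ 1/2 := by
      rw [div_le_div_iff₀ hp0 (by norm_num)]
      linarith
    linarith
  have hupper : ∀ t : ℝ, T₀ + 1 ≤ t →
      (t - T₀) ^ ((1:ℝ)/2 - 1/p)
        * (eLpNorm (fun x : EuclideanSpace ℝ (Fin 2) => lambOseen t x - lambOseen (t - T₀) x)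
            q volume).toReal
        ≤ C * (t - T₀)⁻¹ := by
    intro t ht
    have ht0 : 0 < t := by linarith
    have hts : 0 < t - T₀ := by linarith
    have h1 : eLpNorm (fun x : EuclideanSpace ℝ (Fin 2) => lambOseen t x - lambOseen (t - T₀) x)
        q volume
        ≤ eLpNorm (fun x : EuclideanSpace ℝ (Fin 2) =>
            (T₀ / (8 * π * (t - T₀) * t)) * (‖x‖ * rexp (-‖x‖ ^ 2 / (4 * t)))) q volume := by
      apply eLpNorm_mono_real
      intro x
      have h := lambOseen_sub_norm_le hts (by linarith : t - T₀ < t) x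
      rw [show t - (t - T₀) = T₀ by ring] at h
      exact h
    have h2 : eLpNorm (fun x : EuclideanSpace ℝ (Fin 2) =>
            (T₀ / (8 * π * (t - T₀) * t)) * (‖x‖ * rexp (-‖x‖ ^ 2 / (4 * t)))) q volume
        = ENNReal.ofReal (T₀ / (8 * π * (t - T₀) * t))
            * (ENNReal.ofReal (Real.sqrt t) * ENNReal.ofReal t ^ (1/p)
                * eLpNorm Φ q volume) := by
      rw [show (fun x : EuclideanSpace ℝ (Fin 2) =>
            (T₀ / (8 * π * (t - T₀) * t)) * (‖x‖ * rexp (-‖x‖ ^ 2 / (4 * t))))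
          = (T₀ / (8 * π * (t - T₀) * t))
              • (fun x : EuclideanSpace ℝ (Fin 2) => ‖x‖ * rexp (-‖x‖ ^ 2 / (4 * t))) from rfl,
        eLpNorm_const_smul, eLpNorm_scaled hp0 ht0,
        Real.enorm_eq_ofReal (by positivity : (0:ℝ) ≤ T₀ / (8 * π * (t - T₀) * t))]
    have hRHSne : ENNReal.ofReal (T₀ / (8 * π * (t - T₀) * t))
        * (ENNReal.ofReal (Real.sqrt t) * ENNReal.ofReal t ^ (1/p)
            * eLpNorm Φ q volume) ≠ ⊤ :=
      ENNReal.mul_ne_top ENNReal.ofReal_ne_top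
        (ENNReal.mul_ne_top (ENNReal.mul_ne_top ENNReal.ofReal_ne_top
          (ENNReal.rpow_ne_top_of_nonneg (by positivity) ENNReal.ofReal_ne_top)) hKtop)
    have h3 : (eLpNorm (fun x : EuclideanSpace ℝ (Fin 2) => lambOseen t x - lambOseen (t - T₀) x)
          q volume).toReal
        ≤ (T₀ / (8 * π * (t - T₀) * t)) * (Real.sqrt t * t ^ (1/p) * K) := by
      have h := ENNReal.toReal_mono hRHSne (h2 ▸ h1)
      rwa [ENNReal.toReal_mul, ENNReal.toReal_mul, ENNReal.toReal_mul,
        ENNReal.toReal_ofReal (by positivity : (0:ℝ) ≤ T₀ / (8 * π * (t - T₀) * t)),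
        ENNReal.toReal_ofReal (Real.sqrt_nonneg t),
        ← ENNReal.toReal_rpow, ENNReal.toReal_ofReal ht0.le] at h
    have hb0 : 0 ≤ (T₀ / (8 * π * (t - T₀) * t)) * (Real.sqrt t * t ^ (1/p) * K) :=
      mul_nonneg (by positivity) (mul_nonneg (by positivity) hK0)
    calc (t - T₀) ^ ((1:ℝ)/2 - 1/p)
          * (eLpNorm (fun x : EuclideanSpace ℝ (Fin 2) => lambOseen t x - lambOseen (t - T₀) x)
              q volume).toReal
        ≤ (t - T₀) ^ ((1:ℝ)/2 - 1/p)
            * ((T₀ / (8 * π * (t - T₀) * t)) * (Real.sqrt t * t ^ (1/p) * K)) :=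
          mul_le_mul_of_nonneg_left h3 (Real.rpow_nonneg hts.le _)
      _ ≤ t ^ ((1:ℝ)/2 - 1/p)
            * ((T₀ / (8 * π * (t - T₀) * t)) * (Real.sqrt t * t ^ (1/p) * K)) :=
          mul_le_mul_of_nonneg_right (Real.rpow_le_rpow hts.le (by linarith) hα) hb0
      _ = C * (t - T₀)⁻¹ := by
          rw [Real.sqrt_eq_rpow]
          have hcomb : t ^ ((1:ℝ)/2 - 1/p) * t ^ ((1:ℝ)/2) * t ^ (1/p) = t := by
            rw [← Real.rpow_add ht0, ← Real.rpow_add ht0,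
              show (1:ℝ)/2 - 1/p + 1/2 + 1/p = 1 by ring, Real.rpow_one]
          rw [show t ^ ((1:ℝ)/2 - 1/p)
              * ((T₀ / (8 * π * (t - T₀) * t)) * (t ^ ((1:ℝ)/2) * t ^ (1/p) * K))
              = (t ^ ((1:ℝ)/2 - 1/p) * t ^ ((1:ℝ)/2) * t ^ (1/p)) * T₀ * K
                  / (8 * π * (t - T₀) * t) by ring, hcomb, hC]
          field_simp
  have htend : Tendsto (fun t : ℝ => C * (t - T₀)⁻¹) atTop (𝓝 0) := by
    have h := tendsto_inv_atTop_zero.comp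
      (tendsto_atTop_add_const_right atTop (-T₀) (tendsto_id (α := ℝ)))
    have h2 := h.const_mul C
    simpa [Function.comp_def, sub_eq_add_neg] using h2
  refine tendsto_of_tendsto_of_tendsto_of_le_of_le' tendsto_const_nhds htend ?_ ?_
  · filter_upwards [eventually_ge_atTop (T₀ + 1)] with t ht
    exact mul_nonneg (Real.rpow_nonneg (by linarith) _) ENNReal.toReal_nonneg
  · filter_upwards [eventually_ge_atTop (T₀ + 1)] with t ht
    exact hupper t ht
end
end
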